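/- arXiv:2601.01389 — 2 statements merged into one kernel-verified Lean document; each statement's English description precedes it below -/
import Mathlib

section
/- Let m ≥ 1 be an integer and r0 > 0 a real number. Then the integral ∫_0^{r0} J_m(r)² · r dr is positive, and J_m(r0) / √(∫_0^{r0} J_m(r)² · r dr) equals (√(2m+2) · r0^{−1} + I_3(m, r0)) / √(1 + I_4(m, r0)), where J_m is the Bessel function of the first kind of integer order m defined by its power series. -/
open Real

/-- Bessel function of the first kind, defined by its power series. -/
noncomputable def besselJ (α : ℝ) (x : ℝ) : ℝ :=
  ∑' k : ℕ,
    ((-1 : ℝ) ^ k / ((Nat.factorial k : ℝ) * Real.Gamma ((k : ℝ) + α + 1))) *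
      (x / 2) ^ (2 * (k : ℝ) + α)

/-- `I₃(m, r₀)` from the paper. -/
noncomputable def I3 (m : ℕ) (r0 : ℝ) : ℝ :=
  ∑' k : ℕ,
    ((-1 : ℝ) ^ (k + 1) / (Nat.factorial (k + 1) : ℝ)) *
      (Real.Gamma ((m : ℝ) + 1) * Real.sqrt (2 * (m : ℝ) + 2) /
        Real.Gamma ((m : ℝ) + ((k : ℝ) + 1) + 1)) *
      (r0 / 2) ^ (2 * (k + 1)) * r0⁻¹

/-- `I₄(m, r₀)` from the paper. -/
noncomputable def I4 (m : ℕ) (r0 : ℝ) : ℝ :=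
  ∑' k : ℕ,
    (-1 : ℝ) ^ (k + 1) * (r0 / 2) ^ (2 * (k + 1)) *
      ((2 * (m : ℝ) + 2) / (2 * (m : ℝ) + 2 * ((k : ℝ) + 1) + 2)) *
      ∑ p ∈ Finset.HasAntidiagonal.antidiagonal (k + 1),
        Real.Gamma ((m : ℝ) + 1) ^ 2 /
          ((Nat.factorial p.1 : ℝ) * (Nat.factorial p.2 : ℝ) *
            Real.Gamma ((m : ℝ) + (p.1 : ℝ) + 1) * Real.Gamma ((m : ℝ) + (p.2 : ℝ) + 1))

open Real MeasureTheory Finset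

/-- coefficient of `r^(2k+m)` in `J_m`. -/
noncomputable def cJ (m k : ℕ) : ℝ :=
  (-1)^k / ((Nat.factorial k : ℝ) * (Nat.factorial (k+m) : ℝ) * 2^(2*k+m))

/-- power series form of `J_m`. -/
noncomputable def gJ (m : ℕ) (r : ℝ) : ℝ := ∑' k, cJ m k * r ^ (2*k+m)

lemma abs_cJ_le (m k : ℕ) : |cJ m k| ≤ ((Nat.factorial k : ℝ))⁻¹ := by
  have h1 : (0:ℝ) < (Nat.factorial k : ℝ) := by positivity
  have h2 : (0:ℝ) < (Nat.factorial (k+m) : ℝ) := by positivity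
  have h3 : (0:ℝ) < (2:ℝ)^(2*k+m) := by positivity
  rw [cJ, abs_div, abs_pow, abs_neg, abs_one, one_pow, one_div,
    abs_of_pos (by positivity)]
  rw [inv_le_inv₀ (by positivity) h1]
  calc (Nat.factorial k : ℝ) = (Nat.factorial k : ℝ) * 1 * 1 := by ring
  _ ≤ (Nat.factorial k : ℝ) * (Nat.factorial (k+m):ℝ) * 2^(2*k+m) := by
      gcongr
      · exact_mod_cast Nat.one_le_iff_ne_zero.mpr (Nat.factorial_ne_zero _)
      · exact one_le_pow₀ one_le_two

lemma abs_cJ_term_le (m k : ℕ) (r : ℝ) :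
    |cJ m k * r ^ (2*k+m)| ≤ |r|^m * ((r^2)^k / Nat.factorial k) := by
  rw [abs_mul, abs_pow]
  have : |r| ^ (2*k+m) = |r|^m * (r^2)^k := by
    rw [pow_add, pow_mul, sq_abs, mul_comm]
  calc |cJ m k| * |r| ^ (2*k+m)
      ≤ ((Nat.factorial k : ℝ))⁻¹ * (|r|^m * (r^2)^k) := by
        rw [this]; exact mul_le_mul_of_nonneg_right (abs_cJ_le m k) (by positivity)
  _ = |r|^m * ((r^2)^k / Nat.factorial k) := by ring

lemma summable_abs_cJ (m : ℕ) (r : ℝ) :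
    Summable (fun k => |cJ m k * r ^ (2*k+m)|) := by
  refine Summable.of_nonneg_of_le (fun k => abs_nonneg _) (fun k => abs_cJ_term_le m k r) ?_
  exact (Real.summable_pow_div_factorial (r^2)).mul_left _

lemma summable_cJ (m : ℕ) (r : ℝ) : Summable (fun k => cJ m k * r ^ (2*k+m)) :=
  (summable_abs_cJ m r).of_abs

lemma besselJ_eq_gJ (m : ℕ) (hm : 1 ≤ m) {r : ℝ} (hr : 0 ≤ r) :
    besselJ (m : ℝ) r = gJ m r := by
  unfold besselJ gJ
  refine tsum_congr fun k => ?_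
  have hg : Real.Gamma ((k:ℝ) + (m:ℝ) + 1) = (Nat.factorial (k+m) : ℝ) := by
    rw [show ((k:ℝ) + (m:ℝ) + 1) = ((k+m : ℕ):ℝ) + 1 by push_cast; ring,
      Real.Gamma_nat_eq_factorial]
  rw [hg]
  rcases hr.eq_or_lt with h | h
  · subst h
    rw [show ((0:ℝ)/2) = 0 by norm_num, Real.zero_rpow (by positivity),
      zero_pow (by omega), mul_zero, mul_zero]
  · rw [show (2*(k:ℝ)+(m:ℝ)) = ((2*k+m : ℕ):ℝ) by push_cast; ring,
      Real.rpow_natCast, div_pow, cJ]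
    ring

/-- coefficient of `r^(2n+2m)` in `J_m^2`. -/
noncomputable def dJ (m n : ℕ) : ℝ := ∑ p ∈ Finset.HasAntidiagonal.antidiagonal n, cJ m p.1 * cJ m p.2

lemma gJ_sq (m : ℕ) (r : ℝ) :
    gJ m r ^ 2 = ∑' n, dJ m n * r ^ (2*n+2*m) := by
  rw [sq, gJ,
    tsum_mul_tsum_eq_tsum_sum_antidiagonal_of_summable_norm
      (by simpa [abs_mul, abs_pow] using summable_abs_cJ m r)
      (by simpa [abs_mul, abs_pow] using summable_abs_cJ m r)]
  refine tsum_congr fun n => ?_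
  rw [dJ, Finset.sum_mul]
  refine Finset.sum_congr rfl fun p hp => ?_
  have hpn : p.1 + p.2 = n := Finset.HasAntidiagonal.mem_antidiagonal.mp hp
  rw [show 2*n+2*m = (2*p.1+m)+(2*p.2+m) by omega, pow_add]
  ring

lemma sum_antidiag_factorial (n : ℕ) :
    ∑ p ∈ Finset.HasAntidiagonal.antidiagonal n, ((Nat.factorial p.1 : ℝ) * (Nat.factorial p.2 : ℝ))⁻¹
      = 2^n / Nat.factorial n := by
  rw [Finset.Nat.sum_antidiagonal_eq_sum_range_succ_mk]
  have : ∀ k ∈ Finset.range (n+1),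
      ((Nat.factorial k : ℝ) * (Nat.factorial (n-k) : ℝ))⁻¹
        = (n.choose k : ℝ) / Nat.factorial n := by
    intro k hk
    have hkn : k ≤ n := Nat.lt_succ_iff.mp (Finset.mem_range.mp hk)
    rw [Nat.cast_choose ℝ hkn]
    field_simp
  rw [Finset.sum_congr rfl this, ← Finset.sum_div]
  rw [← Nat.cast_sum, Nat.sum_range_choose]
  norm_num

lemma abs_dJ_le (m n : ℕ) : |dJ m n| ≤ 2^n / Nat.factorial n := by
  rw [dJ]
  calc |∑ p ∈ Finset.HasAntidiagonal.antidiagonal n, cJ m p.1 * cJ m p.2|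
      ≤ ∑ p ∈ Finset.HasAntidiagonal.antidiagonal n, |cJ m p.1 * cJ m p.2| := Finset.abs_sum_le_sum_abs _ _
  _ ≤ ∑ p ∈ Finset.HasAntidiagonal.antidiagonal n, ((Nat.factorial p.1 : ℝ) * (Nat.factorial p.2 : ℝ))⁻¹ := by
      refine Finset.sum_le_sum fun p _ => ?_
      rw [abs_mul, mul_inv]
      exact mul_le_mul (abs_cJ_le m p.1) (abs_cJ_le m p.2) (abs_nonneg _) (by positivity)
  _ = 2^n / Nat.factorial n := sum_antidiag_factorial n
section B
variable {m : ℕ}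

lemma summable_dJ_mul (m : ℕ) {x : ℝ} (hx : 0 ≤ x) (C : ℝ) :
    Summable (fun n => |dJ m n| * (C * x^n)) := by
  refine Summable.of_norm_bounded (((Real.summable_pow_div_factorial (2*x)).mul_left |C|)) ?_
  intro n
  rw [Real.norm_eq_abs, abs_mul, abs_mul, abs_abs, abs_pow, abs_of_nonneg hx]
  calc |dJ m n| * (|C| * x^n) ≤ (2^n / Nat.factorial n) * (|C| * x^n) := by
        exact mul_le_mul_of_nonneg_right (abs_dJ_le m n) (by positivity)
  _ = |C| * ((2*x)^n / Nat.factorial n) := by rw [mul_pow]; ring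

lemma integral_gJ_sq (m : ℕ) {r0 : ℝ} (hr0 : 0 < r0) :
    ∫ r in (0:ℝ)..r0, gJ m r ^ 2 * r
      = ∑' n : ℕ, dJ m n * (r0^(2*n+2*m+2) / (2*(n:ℝ)+2*(m:ℝ)+2)) := by
  have hfun : ∀ r : ℝ, gJ m r ^ 2 * r = ∑' n : ℕ, dJ m n * r ^ (2*n+2*m+1) := by
    intro r
    rw [gJ_sq, ← tsum_mul_right]
    exact tsum_congr fun n => by rw [pow_succ]; ring
  have hint : ∀ n : ℕ, ∫ r in Set.Ioc (0:ℝ) r0, dJ m n * r ^ (2*n+2*m+1)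
      = dJ m n * (r0^(2*n+2*m+2) / (2*(n:ℝ)+2*(m:ℝ)+2)) := by
    intro n
    rw [← intervalIntegral.integral_of_le hr0.le, intervalIntegral.integral_const_mul,
      integral_pow, zero_pow (by omega), sub_zero]
    push_cast
    ring
  rw [intervalIntegral.integral_of_le hr0.le]
  simp only [hfun]
  rw [← MeasureTheory.integral_tsum_of_summable_integral_norm]
  · exact tsum_congr hint
  · intro n
    exact ((continuous_const.mul (continuous_pow _)).integrableOn_Ioc)
  · have : ∀ n : ℕ, ∫ r in Set.Ioc (0:ℝ) r0, ‖dJ m n * r ^ (2*n+2*m+1)‖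
        = |dJ m n| * (r0^(2*n+2*m+2) / (2*(n:ℝ)+2*(m:ℝ)+2)) := by
      intro n
      have : ∀ r ∈ Set.Ioc (0:ℝ) r0, ‖dJ m n * r ^ (2*n+2*m+1)‖
          = |dJ m n| * r ^ (2*n+2*m+1) := by
        intro r hr
        rw [Real.norm_eq_abs, abs_mul, abs_pow, abs_of_pos hr.1]
      rw [MeasureTheory.setIntegral_congr_fun measurableSet_Ioc this,
        ← intervalIntegral.integral_of_le hr0.le, intervalIntegral.integral_const_mul,
        integral_pow, zero_pow (by omega), sub_zero]
      push_cast
      ring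
    rw [funext this]
    -- summable
    refine Summable.of_nonneg_of_le (fun n => by positivity) (fun n => ?_)
      (summable_dJ_mul m (x := r0^2) (by positivity) (r0^(2*m+2)))
    have h1 : r0^(2*n+2*m+2) = r0^(2*m+2) * (r0^2)^n := by
      rw [← pow_mul, ← pow_add]; ring_nf
    rw [h1]
    have hD : (1:ℝ) ≤ 2*(n:ℝ)+2*(m:ℝ)+2 := by
      have := Nat.cast_nonneg (α := ℝ) n
      have := Nat.cast_nonneg (α := ℝ) m
      linarith
    exact mul_le_mul_of_nonneg_left (div_le_self (by positivity) hD) (abs_nonneg _)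

end B
section C

lemma Gamma_nat_add (m p : ℕ) :
    Real.Gamma ((m:ℝ) + (p:ℝ) + 1) = (Nat.factorial (m+p) : ℝ) := by
  rw [show (m:ℝ)+(p:ℝ)+1 = ((m+p:ℕ):ℝ)+1 by push_cast; ring, Real.Gamma_nat_eq_factorial]

noncomputable def AA (m : ℕ) (r0 : ℝ) : ℝ :=
  r0^(2*m+2) / (2^(2*m) * (2*(m:ℝ)+2) * (Nat.factorial m : ℝ)^2)

lemma cJ_mul (m n l s : ℕ) (h : n + l = s) :
    cJ m n * cJ m l = (-1)^s /
      (((Nat.factorial n : ℝ) * Nat.factorial l * Nat.factorial (n+m) * Nat.factorial (l+m))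
        * 2^(2*s+2*m)) := by
  subst h
  rw [cJ, cJ, div_mul_div_comm, ← pow_add,
    show 2*(n+l)+2*m = (2*n+m) + (2*l+m) by ring, pow_add]
  ring

lemma summable_u (m : ℕ) {r0 : ℝ} (hr0 : 0 < r0) :
    Summable (fun n : ℕ => dJ m n * (r0^(2*n+2*m+2) / (2*(n:ℝ)+2*(m:ℝ)+2))) := by
  apply Summable.of_norm_bounded (summable_dJ_mul m (x := r0^2) (by positivity) (r0^(2*m+2)))
  intro n
  rw [Real.norm_eq_abs, abs_mul]
  have h1 : r0^(2*n+2*m+2) = r0^(2*m+2) * (r0^2)^n := by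
    rw [← pow_mul, ← pow_add]; ring_nf
  have hD : (1:ℝ) ≤ 2*(n:ℝ)+2*(m:ℝ)+2 := by
    have := Nat.cast_nonneg (α := ℝ) n
    have := Nat.cast_nonneg (α := ℝ) m
    linarith
  have habs : |r0^(2*n+2*m+2) / (2*(n:ℝ)+2*(m:ℝ)+2)| = r0^(2*n+2*m+2) / (2*(n:ℝ)+2*(m:ℝ)+2) := by
    rw [abs_of_nonneg]; positivity
  rw [habs, h1]
  exact mul_le_mul_of_nonneg_left (div_le_self (by positivity) hD) (abs_nonneg _)

lemma u_zero (m : ℕ) (r0 : ℝ) :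
    dJ m 0 * (r0^(2*0+2*m+2) / (2*(0:ℝ)+2*(m:ℝ)+2)) = AA m r0 := by
  have hm : ((Nat.factorial m : ℝ)) ≠ 0 := by positivity
  simp only [dJ, Finset.Nat.antidiagonal_zero, Finset.sum_singleton, cJ, AA]
  norm_num
  field_simp
  ring_nf
  try exact Or.inl trivial

lemma u_succ (m k : ℕ) (r0 : ℝ) :
    dJ m (k+1) * (r0^(2*(k+1)+2*m+2) / (2*((k:ℝ)+1)+2*(m:ℝ)+2))
      = AA m r0 * ((-1 : ℝ) ^ (k + 1) * (r0 / 2) ^ (2 * (k + 1)) *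
          ((2 * (m : ℝ) + 2) / (2 * (m : ℝ) + 2 * ((k : ℝ) + 1) + 2)) *
          ∑ p ∈ Finset.HasAntidiagonal.antidiagonal (k + 1),
            (Nat.factorial m : ℝ) ^ 2 /
              ((Nat.factorial p.1 : ℝ) * (Nat.factorial p.2 : ℝ) *
                (Nat.factorial (m + p.1) : ℝ) * (Nat.factorial (m + p.2) : ℝ))) := by
  rw [dJ, Finset.sum_mul]
  simp only [Finset.mul_sum]
  refine Finset.sum_congr rfl fun p hp => ?_
  have hpn : p.1 + p.2 = k + 1 := Finset.HasAntidiagonal.mem_antidiagonal.mp hp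
  rw [cJ_mul m p.1 p.2 (k+1) hpn, AA, Nat.add_comm m p.1, Nat.add_comm m p.2]
  have hf1 : (0:ℝ) < Nat.factorial p.1 := by positivity
  have hf2 : (0:ℝ) < Nat.factorial p.2 := by positivity
  have hf3 : (0:ℝ) < Nat.factorial (p.1+m) := by positivity
  have hf4 : (0:ℝ) < Nat.factorial (p.2+m) := by positivity
  have hfm : (0:ℝ) < Nat.factorial m := by positivity
  have hD : (0:ℝ) < 2*((k:ℝ)+1)+2*(m:ℝ)+2 := by positivity
  have hD' : (0:ℝ) < 2*(m:ℝ)+2*((k:ℝ)+1)+2 := by positivity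
  rw [div_pow]
  field_simp
  ring

lemma integral_eq_A_mul (m : ℕ) {r0 : ℝ} (hr0 : 0 < r0) :
    ∫ r in (0:ℝ)..r0, gJ m r ^ 2 * r = AA m r0 * (1 + I4 m r0) := by
  rw [integral_gJ_sq m hr0, Summable.tsum_eq_zero_add (summable_u m hr0),
    mul_add, mul_one, I4, ← tsum_mul_left]
  congr 1
  · rw [← u_zero m r0]
    norm_num
  · refine tsum_congr fun k => ?_
    simp only [Gamma_nat_add, Real.Gamma_nat_eq_factorial]
    rw [← u_succ m k r0]
    push_cast
    ring

end C
section D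

noncomputable def eS (m : ℕ) (r0 : ℝ) (k : ℕ) : ℝ :=
  (-1)^k * (Nat.factorial m : ℝ) / ((Nat.factorial k : ℝ) * (Nat.factorial (k+m) : ℝ))
    * (r0/2)^(2*k)

lemma abs_eS_le (m : ℕ) (r0 : ℝ) (k : ℕ) :
    |eS m r0 k| ≤ ((r0/2)^2)^k / Nat.factorial k := by
  rw [eS, abs_mul, abs_div, abs_mul, abs_pow, abs_neg, abs_one, one_pow, one_mul,
    abs_of_pos (show (0:ℝ) < (Nat.factorial k : ℝ) * (Nat.factorial (k+m) : ℝ) by positivity),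
    abs_pow, ← sq_abs, ← pow_mul, pow_mul]
  have h1 : (Nat.factorial m : ℝ) / ((Nat.factorial k : ℝ) * (Nat.factorial (k+m) : ℝ))
      ≤ (Nat.factorial k : ℝ)⁻¹ := by
    rw [div_le_iff₀ (by positivity), ← mul_assoc, inv_mul_cancel₀ (by positivity), one_mul]
    exact_mod_cast Nat.factorial_le (Nat.le_add_left m k)
  rw [Nat.abs_cast, sq_abs]
  calc (Nat.factorial m : ℝ) / ((Nat.factorial k : ℝ) * (Nat.factorial (k+m) : ℝ)) * ((r0/2)^2)^k
      ≤ (Nat.factorial k : ℝ)⁻¹ * ((r0/2)^2)^k :=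
        mul_le_mul_of_nonneg_right h1 (by positivity)
  _ = ((r0/2)^2)^k / Nat.factorial k := by ring

lemma summable_eS (m : ℕ) (r0 : ℝ) : Summable (eS m r0) := by
  apply Summable.of_abs
  exact Summable.of_nonneg_of_le (fun k => abs_nonneg _) (abs_eS_le m r0)
    (by simpa [div_eq_mul_inv] using
      (Real.summable_pow_div_factorial ((r0/2)^2)))

lemma besselJ_eq_S (m : ℕ) (hm : 1 ≤ m) {r0 : ℝ} (hr0 : 0 < r0) :
    besselJ (m : ℝ) r0 = (r0/2)^m / (Nat.factorial m : ℝ) * ∑' k, eS m r0 k := by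
  rw [besselJ_eq_gJ m hm hr0.le, gJ, ← tsum_mul_left]
  refine tsum_congr fun k => ?_
  rw [cJ, eS, div_pow, div_pow,
    show r0^(2*k+m) = r0^(2*k) * r0^m by rw [pow_add],
    show (2:ℝ)^(2*k+m) = 2^(2*k) * 2^m by rw [pow_add]]
  have h1 : ((Nat.factorial k : ℝ)) ≠ 0 := by positivity
  have h2 : ((Nat.factorial (k+m) : ℝ)) ≠ 0 := by positivity
  have h3 : ((Nat.factorial m : ℝ)) ≠ 0 := by positivity
  field_simp

lemma sqrt_add_I3 (m : ℕ) {r0 : ℝ} (hr0 : 0 < r0) :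
    Real.sqrt (2*(m:ℝ)+2) * r0⁻¹ + I3 m r0
      = Real.sqrt (2*(m:ℝ)+2) * r0⁻¹ * ∑' k, eS m r0 k := by
  rw [← tsum_mul_left, Summable.tsum_eq_zero_add ((summable_eS m r0).mul_left _)]
  congr 1
  · rw [eS]
    have h3 : ((Nat.factorial m : ℝ)) ≠ 0 := by positivity
    norm_num
    rw [div_self h3, mul_one]
  · rw [I3]
    refine tsum_congr fun k => ?_
    rw [show ((m:ℝ) + ((k:ℝ)+1) + 1) = ((m+k+1 : ℕ):ℝ) + 1 by push_cast; ring,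
      Real.Gamma_nat_eq_factorial, Real.Gamma_nat_eq_factorial, eS,
      show k+1+m = m+k+1 by omega]
    ring

end D
section E
open Set

lemma abs_tsum_le' {f : ℕ → ℝ} (h : Summable fun k => |f k|) :
    |∑' k, f k| ≤ ∑' k, |f k| := by
  have := norm_tsum_le_tsum_norm (f := f) (by simpa [Real.norm_eq_abs] using h)
  simpa [Real.norm_eq_abs] using this

lemma measurable_gJ (m : ℕ) : Measurable (gJ m) := by
  apply measurable_of_tendsto_metrizable
    (f := fun N r => ∑ k ∈ Finset.range N, cJ m k * r^(2*k+m))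
  · intro N
    exact Finset.measurable_sum _ fun k _ => (measurable_id.pow_const _).const_mul _
  · rw [tendsto_pi_nhds]
    intro r
    exact (summable_cJ m r).hasSum.tendsto_sum_nat

lemma gJ_abs_le (m : ℕ) {r0 r : ℝ} (h : |r| ≤ r0) :
    |gJ m r| ≤ ∑' k : ℕ, r0^m * ((r0^2)^k / Nat.factorial k) := by
  have hr0 : 0 ≤ r0 := le_trans (abs_nonneg r) h
  have hsum2 : Summable (fun k : ℕ => r0^m * ((r0^2)^k / Nat.factorial k)) :=
    (Real.summable_pow_div_factorial (r0^2)).mul_left _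
  calc |gJ m r| ≤ ∑' k, |cJ m k * r^(2*k+m)| := abs_tsum_le' (summable_abs_cJ m r)
  _ ≤ ∑' k : ℕ, r0^m * ((r0^2)^k / Nat.factorial k) := by
      refine Summable.tsum_le_tsum (fun k => ?_) (summable_abs_cJ m r) hsum2
      refine (abs_cJ_term_le m k r).trans ?_
      have h2 : r^2 ≤ r0^2 := by rw [← sq_abs]; gcongr
      have h2' : (0:ℝ) ≤ r^2 := sq_nonneg r
      gcongr
  
lemma intervalIntegrable_gJ (m : ℕ) {r0 : ℝ} (hr0 : 0 < r0) :
    IntervalIntegrable (fun r => gJ m r ^ 2 * r) MeasureTheory.volume 0 r0 := by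
  rw [intervalIntegrable_iff_integrableOn_Ioc_of_le hr0.le]
  constructor
  · exact (((measurable_gJ m).pow_const 2).mul measurable_id).aestronglyMeasurable
  · apply MeasureTheory.HasFiniteIntegral.of_bounded
      (C := (∑' k : ℕ, r0^m * ((r0^2)^k / Nat.factorial k))^2 * r0)
    filter_upwards [MeasureTheory.ae_restrict_mem measurableSet_Ioc] with r hr
    have h1 : |gJ m r| ≤ ∑' k : ℕ, r0^m * ((r0^2)^k / Nat.factorial k) :=
      gJ_abs_le m (by rw [abs_of_pos hr.1]; exact hr.2)
    have h0 : (0:ℝ) ≤ ∑' k : ℕ, r0^m * ((r0^2)^k / Nat.factorial k) :=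
      le_trans (abs_nonneg _) h1
    have hsq : |gJ m r|^2 ≤ (∑' k : ℕ, r0^m * ((r0^2)^k / Nat.factorial k))^2 :=
      pow_le_pow_left₀ (abs_nonneg _) h1 2
    rw [Real.norm_eq_abs, abs_mul, abs_of_pos hr.1, ← sq_abs, abs_of_nonneg (sq_nonneg _)]
    exact mul_le_mul hsq hr.2 hr.1.le (by positivity)

lemma two_pow_le_factorial_succ (k : ℕ) : (2:ℝ)^k ≤ (Nat.factorial (k+1) : ℝ) := by
  have := Nat.factorial_mul_pow_le_factorial (m := 1) (n := k)
  simp [Nat.factorial] at this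
  exact_mod_cast by simpa [Nat.add_comm 1 k] using this

lemma gJ_pos (m : ℕ) (hm : 1 ≤ m) {r : ℝ} (h0 : 0 < r) (h1 : r ≤ 1)
    (h2 : 2*r^2 < ((Nat.factorial m : ℝ) * 2^m)⁻¹) : 0 < gJ m r := by
  have hs := summable_cJ m r
  rw [gJ, Summable.tsum_eq_zero_add hs]
  have hhead : cJ m 0 * r^(2*0+m) = ((Nat.factorial m:ℝ) * 2^m)⁻¹ * r^m := by
    simp [cJ]
  have hstail : Summable (fun k => cJ m (k+1) * r^(2*(k+1)+m)) :=
    (summable_cJ m r).comp_injective (add_left_injective 1)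
  have habs : Summable (fun k => |cJ m (k+1) * r^(2*(k+1)+m)|) :=
    (summable_abs_cJ m r).comp_injective (add_left_injective 1)
  have htail : |∑' k : ℕ, cJ m (k+1) * r^(2*(k+1)+m)| ≤ 2 * r^(m+2) := by
    calc |∑' k : ℕ, cJ m (k+1) * r^(2*(k+1)+m)|
        ≤ ∑' k : ℕ, |cJ m (k+1) * r^(2*(k+1)+m)| := abs_tsum_le' habs
    _ ≤ ∑' k : ℕ, ((1:ℝ)/2)^k * r^(m+2) := by
        refine Summable.tsum_le_tsum (fun k => ?_) habs
          ((summable_geometric_two).mul_right _)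
        rw [abs_mul, abs_pow, abs_of_pos h0]
        calc |cJ m (k+1)| * r^(2*(k+1)+m)
            ≤ ((Nat.factorial (k+1) : ℝ))⁻¹ * r^(m+2) := by
              apply mul_le_mul (abs_cJ_le m (k+1))
                (pow_le_pow_of_le_one h0.le h1 (by omega)) (by positivity) (by positivity)
        _ ≤ ((1:ℝ)/2)^k * r^(m+2) := by
              apply mul_le_mul_of_nonneg_right ?_ (by positivity)
              rw [one_div, inv_pow, inv_le_inv₀ (by positivity) (by positivity)]
              exact two_pow_le_factorial_succ k
    _ = 2 * r^(m+2) := by rw [tsum_mul_right, tsum_geometric_two]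
  have hpow : r^(m+2) = r^m * r^2 := by rw [pow_add]
  have hrm : 0 < r^m := pow_pos h0 m
  have := abs_le.mp htail
  rw [hhead]
  nlinarith [this.1]

end E

theorem besselJ_ratio_eq_2d (m : ℕ) (hm : 1 ≤ m) (r0 : ℝ) (hr0 : 0 < r0) :
    0 < ∫ r in (0 : ℝ)..r0, besselJ (m : ℝ) r ^ 2 * r ∧
    besselJ (m : ℝ) r0 / Real.sqrt (∫ r in (0 : ℝ)..r0, besselJ (m : ℝ) r ^ 2 * r) =
      (Real.sqrt (2 * (m : ℝ) + 2) * r0⁻¹ + I3 m r0) / Real.sqrt (1 + I4 m r0) := by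
  have hcong : (∫ r in (0 : ℝ)..r0, besselJ (m : ℝ) r ^ 2 * r)
      = ∫ r in (0 : ℝ)..r0, gJ m r ^ 2 * r := by
    refine intervalIntegral.integral_congr fun r hr => ?_
    rw [Set.uIcc_of_le hr0.le] at hr
    rw [besselJ_eq_gJ m hm hr.1]
  have hc0 : (0:ℝ) < ((Nat.factorial m : ℝ) * 2^m)⁻¹ := by positivity
  set b := min 1 (min r0 (Real.sqrt (((Nat.factorial m : ℝ) * 2^m)⁻¹ / 2))) with hbdef
  have hbpos : 0 < b :=
    lt_min one_pos (lt_min hr0 (Real.sqrt_pos.mpr (by positivity)))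
  have hb1 : b ≤ 1 := min_le_left _ _
  have hbr0 : b ≤ r0 := le_trans (min_le_right _ _) (min_le_left _ _)
  have hbs : b ≤ Real.sqrt (((Nat.factorial m : ℝ) * 2^m)⁻¹ / 2) :=
    le_trans (min_le_right _ _) (min_le_right _ _)
  have hI1 : IntervalIntegrable (fun r => gJ m r ^ 2 * r) MeasureTheory.volume 0 b :=
    (intervalIntegrable_gJ m hr0).mono_set
      (by rw [Set.uIcc_of_le hbpos.le, Set.uIcc_of_le hr0.le]
          exact Set.Icc_subset_Icc le_rfl hbr0)
  have hI2 : IntervalIntegrable (fun r => gJ m r ^ 2 * r) MeasureTheory.volume b r0 :=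
    (intervalIntegrable_gJ m hr0).mono_set
      (by rw [Set.uIcc_of_le hbr0, Set.uIcc_of_le hr0.le]
          exact Set.Icc_subset_Icc hbpos.le le_rfl)
  have hpos1 : 0 < ∫ r in (0:ℝ)..b, gJ m r ^ 2 * r := by
    refine intervalIntegral.intervalIntegral_pos_of_pos_on hI1 (fun x hx => ?_) hbpos
    have hx1 : x ≤ 1 := le_trans hx.2.le hb1
    have hxs : x < Real.sqrt (((Nat.factorial m : ℝ) * 2^m)⁻¹ / 2) := lt_of_lt_of_le hx.2 hbs
    have hx2 : x^2 < ((Nat.factorial m : ℝ) * 2^m)⁻¹ / 2 := (Real.lt_sqrt hx.1.le).mp hxs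
    have hg := gJ_pos m hm hx.1 hx1 (by linarith)
    exact mul_pos (pow_pos hg 2) hx.1
  have hpos2 : 0 ≤ ∫ r in b..r0, gJ m r ^ 2 * r :=
    intervalIntegral.integral_nonneg hbr0
      (fun u hu => mul_nonneg (sq_nonneg _) (le_trans hbpos.le hu.1))
  have hsplit : (∫ r in (0:ℝ)..r0, gJ m r ^ 2 * r)
      = (∫ r in (0:ℝ)..b, gJ m r ^ 2 * r) + ∫ r in b..r0, gJ m r ^ 2 * r :=
    (intervalIntegral.integral_add_adjacent_intervals hI1 hI2).symm
  have hIpos : 0 < ∫ r in (0 : ℝ)..r0, besselJ (m : ℝ) r ^ 2 * r := by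
    rw [hcong, hsplit]; linarith
  refine ⟨hIpos, ?_⟩
  have h2m : (0:ℝ) < Real.sqrt (2*(m:ℝ)+2) := Real.sqrt_pos.mpr (by positivity)
  have hA : AA m r0
      = ((r0/2)^m * r0 / (Real.sqrt (2*(m:ℝ)+2) * (Nat.factorial m : ℝ)))^2 := by
    rw [AA, div_pow, mul_pow, mul_pow, Real.sq_sqrt (by positivity), div_pow]
    have hf : ((Nat.factorial m : ℝ)) ≠ 0 := by positivity
    field_simp
    ring
  set B := (r0/2)^m * r0 / (Real.sqrt (2*(m:ℝ)+2) * (Nat.factorial m : ℝ)) with hBdef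
  have hB0 : 0 < B := by positivity
  have hsqrt : Real.sqrt (∫ r in (0 : ℝ)..r0, besselJ (m : ℝ) r ^ 2 * r)
      = B * Real.sqrt (1 + I4 m r0) := by
    rw [hcong, integral_eq_A_mul m hr0, hA, Real.sqrt_mul (sq_nonneg _), Real.sqrt_sq hB0.le]
  rw [hsqrt, besselJ_eq_S m hm hr0, sqrt_add_I3 m hr0, ← div_div]
  congr 1
  rw [hBdef]
  have hf : ((Nat.factorial m : ℝ)) ≠ 0 := by positivity
  have hp : ((r0/2):ℝ)^m ≠ 0 := by positivity
  field_simp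
end

section
/- For any fixed real number r0 > 0 there exists a natural number M2 (depending on r0) such that for every integer m ≥ M2 one has J_m(r0) / √(∫_0^{r0} J_m(r)² · r dr) ≥ (1/2) · √(2m+2) · r0^{−1}, where J_m is the Bessel function of the first kind of integer order m defined by its power series. -/
open Real

namespace BesselAux

/-- Rewrite besselJ at natural order as a series with natural powers. -/
lemma besselJ_eq (m : ℕ) (x : ℝ) :
    besselJ (m : ℝ) x =
      ∑' k : ℕ, (-1 : ℝ) ^ k *
        ((x / 2) ^ (2 * k + m) / ((Nat.factorial k : ℝ) * (Nat.factorial (k + m) : ℝ))) := by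
  unfold besselJ
  refine tsum_congr fun k => ?_
  have h1 : ((k : ℝ) + (m : ℝ) + 1) = ((k + m : ℕ) : ℝ) + 1 := by push_cast; ring
  have h2 : (2 * (k : ℝ) + (m : ℝ)) = ((2 * k + m : ℕ) : ℝ) := by push_cast; ring
  rw [h1, Real.Gamma_nat_eq_factorial, h2, Real.rpow_natCast]
  ring

lemma summable_abs (m : ℕ) (x : ℝ) :
    Summable (fun k : ℕ =>
      |x / 2| ^ (2 * k + m) / ((Nat.factorial k : ℝ) * (Nat.factorial (k + m) : ℝ))) := by
  refine Summable.of_nonneg_of_le (fun k => by positivity) (fun k => ?_)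
    ((Real.summable_pow_div_factorial (|x / 2| ^ 2)).mul_left (|x / 2| ^ m))
  have h1 : |x / 2| ^ (2 * k + m) = |x / 2| ^ m * (|x / 2| ^ 2) ^ k := by
    rw [← pow_mul, ← pow_add]; ring_nf
  have h2 : (1 : ℝ) ≤ (Nat.factorial (k + m) : ℝ) := by
    exact_mod_cast Nat.one_le_iff_ne_zero.mpr (Nat.factorial_ne_zero _)
  have h3 : (0 : ℝ) < (Nat.factorial k : ℝ) := by exact_mod_cast Nat.factorial_pos k
  rw [h1, mul_div_assoc]
  gcongr
  nlinarith

lemma summable_signed (m : ℕ) (x : ℝ) :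
    Summable (fun k : ℕ => (-1 : ℝ) ^ k *
      ((x / 2) ^ (2 * k + m) / ((Nat.factorial k : ℝ) * (Nat.factorial (k + m) : ℝ)))) := by
  apply Summable.of_abs
  have heq : (fun k : ℕ => |(-1 : ℝ) ^ k *
      ((x / 2) ^ (2 * k + m) / ((Nat.factorial k : ℝ) * (Nat.factorial (k + m) : ℝ)))|) =
      fun k : ℕ => |x / 2| ^ (2 * k + m) /
        ((Nat.factorial k : ℝ) * (Nat.factorial (k + m) : ℝ)) := by
    funext k
    rw [abs_mul, abs_pow, abs_neg, abs_one, one_pow, one_mul, abs_div, abs_pow]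
    congr 1
    rw [abs_of_nonneg (by positivity)]
  rw [heq]
  exact summable_abs m x

/-- Alternating series bounds. -/
lemma alt_bounds (a : ℕ → ℝ) (ha : Summable a) (hnn : ∀ k, 0 ≤ a k)
    (hdec : ∀ k, a (k + 1) ≤ a k) :
    a 0 - a 1 ≤ (∑' k, (-1 : ℝ) ^ k * a k) ∧ (∑' k, (-1 : ℝ) ^ k * a k) ≤ a 0 := by
  have he : Summable (fun j : ℕ => a (2 * j)) :=
    ha.comp_injective (fun i j h => by simp only [] at h; omega : Function.Injective (fun j : ℕ => 2 * j))
  have ho : Summable (fun j : ℕ => a (2 * j + 1)) :=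
    ha.comp_injective (fun i j h => by simp only [] at h; omega : Function.Injective (fun j : ℕ => 2 * j + 1))
  have he2 : Summable (fun j : ℕ => a (2 * j + 2)) :=
    ha.comp_injective (fun i j h => by simp only [] at h; omega : Function.Injective (fun j : ℕ => 2 * j + 2))
  have ho2 : Summable (fun j : ℕ => a (2 * j + 3)) :=
    ha.comp_injective (fun i j h => by simp only [] at h; omega : Function.Injective (fun j : ℕ => 2 * j + 3))
  have key : (∑' k, (-1 : ℝ) ^ k * a k) = (∑' j, a (2 * j)) - ∑' j, a (2 * j + 1) := by
    have h1 : HasSum (fun j : ℕ => (-1 : ℝ) ^ (2 * j) * a (2 * j)) (∑' j, a (2 * j)) := by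
      have heq : (fun j : ℕ => (-1 : ℝ) ^ (2 * j) * a (2 * j)) = fun j => a (2 * j) := by
        funext j; rw [pow_mul]; norm_num
      rw [heq]; exact he.hasSum
    have h2 : HasSum (fun j : ℕ => (-1 : ℝ) ^ (2 * j + 1) * a (2 * j + 1))
        (-(∑' j, a (2 * j + 1))) := by
      have heq : (fun j : ℕ => (-1 : ℝ) ^ (2 * j + 1) * a (2 * j + 1)) =
          fun j => -(a (2 * j + 1)) := by
        funext j; rw [pow_succ, pow_mul]; norm_num
      rw [heq]; exact ho.hasSum.neg
    have h3 := HasSum.even_add_odd (f := fun k : ℕ => (-1 : ℝ) ^ k * a k) h1 h2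
    rw [h3.tsum_eq]; ring
  have heq1 : (∑' j, a (2 * j)) = a 0 + ∑' j, a (2 * j + 2) := by
    rw [Summable.tsum_eq_zero_add he]
    congr 1
  have heq2 : (∑' j, a (2 * j + 1)) = a 1 + ∑' j, a (2 * j + 3) := by
    rw [Summable.tsum_eq_zero_add ho]
    congr 1
  have hlow : (∑' j, a (2 * j + 3)) ≤ ∑' j, a (2 * j + 2) :=
    Summable.tsum_le_tsum (fun j => hdec (2 * j + 2)) ho2 he2
  have hup : (∑' j, a (2 * j + 2)) ≤ ∑' j, a (2 * j + 1) :=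
    Summable.tsum_le_tsum (fun j => hdec (2 * j + 1)) he2 ho
  constructor
  · rw [key, heq1, heq2]; linarith
  · rw [key, heq1]; linarith

/-- Two-sided bound on the Bessel function for small argument / large order. -/
lemma besselJ_bounds (m : ℕ) (x : ℝ) (hx : 0 ≤ x) (hx2 : x ^ 2 ≤ (m : ℝ)) :
    (1 / 2) * ((x / 2) ^ m / (Nat.factorial m : ℝ)) ≤ besselJ (m : ℝ) x ∧
      besselJ (m : ℝ) x ≤ (x / 2) ^ m / (Nat.factorial m : ℝ) := by
  set a : ℕ → ℝ := fun k =>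
    (x / 2) ^ (2 * k + m) / ((Nat.factorial k : ℝ) * (Nat.factorial (k + m) : ℝ)) with ha_def
  have hc : (0 : ℝ) ≤ x / 2 := by linarith
  have ha : Summable a := by
    have h := summable_abs m x
    rw [abs_of_nonneg hc] at h
    exact h
  have hnn : ∀ k, 0 ≤ a k := fun k => by simp only [ha_def]; positivity
  have hfm : (0 : ℝ) < (Nat.factorial m : ℝ) := by exact_mod_cast Nat.factorial_pos m
  have hdec : ∀ k, a (k + 1) ≤ a k := by
    intro k
    simp only [ha_def]
    rw [div_le_div_iff₀ (by positivity) (by positivity)]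
    have hfs1 : (Nat.factorial (k + 1) : ℝ) = ((k : ℝ) + 1) * Nat.factorial k := by
      push_cast [Nat.factorial_succ]; ring
    have hfs2 : (Nat.factorial (k + 1 + m) : ℝ) = ((k : ℝ) + m + 1) * Nat.factorial (k + m) := by
      have h : k + 1 + m = (k + m) + 1 := by omega
      rw [h]; push_cast [Nat.factorial_succ]; ring
    have hpow : (x / 2) ^ (2 * (k + 1) + m) = (x / 2) ^ (2 * k + m) * (x / 2) ^ 2 := by
      rw [← pow_add]; congr 1; omega
    rw [hfs1, hfs2, hpow]
    have h1 : (x / 2) ^ 2 ≤ ((k : ℝ) + 1) * ((k : ℝ) + m + 1) := by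
      have hk0 : (0 : ℝ) ≤ (k : ℝ) := Nat.cast_nonneg k
      have hm0 : (0 : ℝ) ≤ (m : ℝ) := Nat.cast_nonneg m
      nlinarith
    have h2 : (0 : ℝ) ≤ (x / 2) ^ (2 * k + m) := by positivity
    have h3 : (0 : ℝ) < (Nat.factorial k : ℝ) := by exact_mod_cast Nat.factorial_pos k
    have h4 : (0 : ℝ) < (Nat.factorial (k + m) : ℝ) := by exact_mod_cast Nat.factorial_pos (k + m)
    nlinarith [mul_le_mul_of_nonneg_right (mul_le_mul_of_nonneg_left h1 h2)
      (le_of_lt (mul_pos h3 h4))]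
  have hb := alt_bounds a ha hnn hdec
  rw [besselJ_eq]
  have ha0 : a 0 = (x / 2) ^ m / (Nat.factorial m : ℝ) := by
    simp [ha_def]
  have ha1 : a 1 = (x / 2) ^ (m + 2) / (((m : ℝ) + 1) * (Nat.factorial m : ℝ)) := by
    simp only [ha_def]
    have e1 : 2 * 1 + m = m + 2 := by omega
    have e2 : (Nat.factorial 1 : ℝ) = 1 := by norm_num [Nat.factorial]
    have e3 : (Nat.factorial (1 + m) : ℝ) = ((m : ℝ) + 1) * Nat.factorial m := by
      have h : 1 + m = m + 1 := by omega
      rw [h]; push_cast [Nat.factorial_succ]; ring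
    rw [e1, e2, e3, one_mul]
  constructor
  · refine le_trans ?_ hb.1
    have key2 : a 1 ≤ (1 / 2) * a 0 := by
      rw [ha0, ha1, ← mul_div_assoc]
      rw [div_le_div_iff₀ (by positivity) hfm]
      have hQ : (x / 2) ^ 2 ≤ ((m : ℝ) + 1) / 2 := by nlinarith
      have hP : (0 : ℝ) ≤ (x / 2) ^ m := by positivity
      have hpow : (x / 2) ^ (m + 2) = (x / 2) ^ m * (x / 2) ^ 2 := by rw [pow_add]
      rw [hpow]
      nlinarith [mul_le_mul_of_nonneg_left hQ (mul_nonneg hP hfm.le)]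
    rw [← ha0]
    linarith
  · rw [ha0] at hb; exact hb.2

lemma measurable_besselJ (m : ℕ) : Measurable fun x => besselJ (m : ℝ) x := by
  have heq : (fun x => besselJ (m : ℝ) x) = fun x => ∑' k : ℕ, (-1 : ℝ) ^ k *
      ((x / 2) ^ (2 * k + m) / ((Nat.factorial k : ℝ) * (Nat.factorial (k + m) : ℝ))) :=
    funext (besselJ_eq m)
  rw [heq]
  apply measurable_of_tendsto_metrizable
    (f := fun n x => ∑ k ∈ Finset.range n, (-1 : ℝ) ^ k *
      ((x / 2) ^ (2 * k + m) / ((Nat.factorial k : ℝ) * (Nat.factorial (k + m) : ℝ))))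
  · intro n
    apply Finset.measurable_sum
    intro k _
    exact (((measurable_id.div_const 2).pow_const _).div_const _).const_mul _
  · rw [tendsto_pi_nhds]
    intro x
    exact (summable_signed m x).hasSum.tendsto_sum_nat

end BesselAux

open BesselAux MeasureTheory in
theorem exists_M2 (r0 : ℝ) (hr0 : 0 < r0) :
    ∃ M2 : ℕ, ∀ m : ℕ, M2 ≤ m →
      besselJ (m : ℝ) r0 / Real.sqrt (∫ r in (0 : ℝ)..r0, besselJ (m : ℝ) r ^ 2 * r) ≥
        1 / 2 * (Real.sqrt (2 * (m : ℝ) + 2) * r0⁻¹) := by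
  refine ⟨⌈r0 ^ 2⌉₊, fun m hm => ?_⟩
  have hm2 : r0 ^ 2 ≤ (m : ℝ) := by exact_mod_cast Nat.ceil_le.mp hm
  set F : ℝ := (Nat.factorial m : ℝ) with hF
  have hFpos : (0 : ℝ) < F := by rw [hF]; exact_mod_cast Nat.factorial_pos m
  have hbd : ∀ x ∈ Set.Icc (0 : ℝ) r0,
      (1 / 2) * ((x / 2) ^ m / F) ≤ besselJ (m : ℝ) x ∧
        besselJ (m : ℝ) x ≤ (x / 2) ^ m / F :=
    fun x hx => besselJ_bounds m x hx.1 (by nlinarith [hx.1, hx.2])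
  -- integrability
  have hmeas : Measurable fun r : ℝ => besselJ (m : ℝ) r ^ 2 * r :=
    ((measurable_besselJ m).pow_const 2).mul measurable_id
  have hIcc : volume (Set.Ioc (0 : ℝ) r0) ≠ ⊤ := by
    rw [Real.volume_Ioc]; exact ENNReal.ofReal_ne_top
  have hint : IntervalIntegrable (fun r => besselJ (m : ℝ) r ^ 2 * r) volume 0 r0 := by
    rw [intervalIntegrable_iff_integrableOn_Ioc_of_le hr0.le]
    apply Measure.integrableOn_of_bounded (M := ((r0 / 2) ^ m / F) ^ 2 * r0) hIcc
      hmeas.aestronglyMeasurable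
    filter_upwards [ae_restrict_mem measurableSet_Ioc] with x hx
    obtain ⟨h1, h2⟩ := hbd x ⟨hx.1.le, hx.2⟩
    have hB : (0 : ℝ) ≤ (x / 2) ^ m / F := div_nonneg (pow_nonneg (by linarith [hx.1]) m) hFpos.le
    have hxpos : (0 : ℝ) < x := hx.1
    have hxx : (0 : ℝ) ≤ x / 2 := by linarith
    have h9 : (x / 2) ^ m ≤ (r0 / 2) ^ m := pow_le_pow_left₀ hxx (by linarith [hx.2]) m
    have h10 : (0 : ℝ) ≤ (x / 2) ^ m / F := by positivity
    have h11 : (x / 2) ^ m / F ≤ (r0 / 2) ^ m / F := by gcongr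
    have h12 : ((x / 2) ^ m / F) ^ 2 ≤ ((r0 / 2) ^ m / F) ^ 2 := pow_le_pow_left₀ h10 h11 2
    calc ‖besselJ (m : ℝ) x ^ 2 * x‖ = besselJ (m : ℝ) x ^ 2 * x := by
          rw [Real.norm_eq_abs, abs_of_nonneg (mul_nonneg (sq_nonneg _) hxpos.le)]
      _ ≤ ((x / 2) ^ m / F) ^ 2 * x := by
          nlinarith [mul_nonneg (sub_nonneg.mpr h2) (by linarith : 0 ≤ (x / 2) ^ m / F + besselJ (m : ℝ) x)]
      _ ≤ ((r0 / 2) ^ m / F) ^ 2 * x := mul_le_mul_of_nonneg_right h12 hxpos.le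
      _ ≤ ((r0 / 2) ^ m / F) ^ 2 * r0 := mul_le_mul_of_nonneg_left hx.2 (by positivity)
  have hint2 : IntervalIntegrable (fun r : ℝ => ((r / 2) ^ m / F) ^ 2 * r) volume 0 r0 := by
    apply Continuous.intervalIntegrable; fun_prop
  have hint3 : IntervalIntegrable (fun r : ℝ => ((1 / 2) * ((r / 2) ^ m / F)) ^ 2 * r)
      volume 0 r0 := by
    apply Continuous.intervalIntegrable; fun_prop
  -- integral of the polynomial majorant/minorant
  have poly : ∀ c : ℝ, (∫ r in (0 : ℝ)..r0, c * r ^ (2 * m + 1)) =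
      c * (r0 ^ (2 * m + 2) / (2 * (m : ℝ) + 2)) := by
    intro c
    rw [intervalIntegral.integral_const_mul, integral_pow,
      zero_pow (by omega : 2 * m + 1 + 1 ≠ 0), sub_zero]
    have e1 : 2 * m + 1 + 1 = 2 * m + 2 := by omega
    rw [e1]
    congr 1
    congr 1
    push_cast; ring
  have hC : (0 : ℝ) < (((2 : ℝ) ^ m * F) ^ 2)⁻¹ := by positivity
  have ef : (fun r : ℝ => ((r / 2) ^ m / F) ^ 2 * r) =
      fun r : ℝ => (((2 : ℝ) ^ m * F) ^ 2)⁻¹ * r ^ (2 * m + 1) := by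
    funext r
    rw [div_pow, div_pow]
    field_simp
    ring
  have ef2 : (fun r : ℝ => ((1 / 2) * ((r / 2) ^ m / F)) ^ 2 * r) =
      fun r : ℝ => ((((2 : ℝ) ^ m * F) ^ 2)⁻¹ / 4) * r ^ (2 * m + 1) := by
    funext r
    rw [mul_pow, div_pow, div_pow]
    field_simp
    ring_nf
    rw [mul_assoc (r * r ^ (m * 2)), ← mul_pow]
    norm_num
  set U : ℝ := (((2 : ℝ) ^ m * F) ^ 2)⁻¹ * (r0 ^ (2 * m + 2) / (2 * (m : ℝ) + 2)) with hU
  have hU0 : 0 < U := by positivity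
  set I : ℝ := ∫ r in (0 : ℝ)..r0, besselJ (m : ℝ) r ^ 2 * r with hI
  have hIU : I ≤ U := by
    have h1 : I ≤ ∫ r in (0 : ℝ)..r0, ((r / 2) ^ m / F) ^ 2 * r := by
      apply intervalIntegral.integral_mono_on hr0.le hint hint2
      intro x hx
      obtain ⟨h1, h2⟩ := hbd x hx
      have hB : (0 : ℝ) ≤ (x / 2) ^ m / F := div_nonneg (pow_nonneg (by linarith [hx.1]) m) hFpos.le
      nlinarith [mul_nonneg (sub_nonneg.mpr h2)
        (by linarith : 0 ≤ (x / 2) ^ m / F + besselJ (m : ℝ) x), hx.1]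
    have h2 : (∫ r in (0 : ℝ)..r0, ((r / 2) ^ m / F) ^ 2 * r) = U := by
      rw [ef, poly, hU]
    linarith
  have hIL : U / 4 ≤ I := by
    have hpl := poly ((((2 : ℝ) ^ m * F) ^ 2)⁻¹ / 4)
    have : (∫ r in (0 : ℝ)..r0, ((1 / 2) * ((r / 2) ^ m / F)) ^ 2 * r) = U / 4 := by
      rw [ef2, hpl, hU]; ring
    rw [← this, hI]
    apply intervalIntegral.integral_mono_on hr0.le hint3 hint
    intro x hx
    obtain ⟨h1, h2⟩ := hbd x hx
    have hB : (0 : ℝ) ≤ (1 / 2) * ((x / 2) ^ m / F) := by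
      have := div_nonneg (pow_nonneg (by linarith [hx.1] : (0:ℝ) ≤ x / 2) m) hFpos.le
      linarith
    nlinarith [hx.1, mul_nonneg (sub_nonneg.mpr h1) (by linarith : 0 ≤ besselJ (m : ℝ) x + (1 / 2) * ((x / 2) ^ m / F))]
  have hI0 : 0 < I := lt_of_lt_of_le (by positivity) hIL
  -- square roots
  set s : ℝ := Real.sqrt (2 * (m : ℝ) + 2) with hs
  have hs2 : s ^ 2 = 2 * (m : ℝ) + 2 := Real.sq_sqrt (by positivity)
  have hs0 : 0 < s := Real.sqrt_pos.mpr (by positivity)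
  have hF0 : F ≠ 0 := hFpos.ne'
  have h2m0 : ((2 : ℝ) ^ m) ≠ 0 := by positivity
  have hm20 : (2 * (m : ℝ) + 2) ≠ 0 := by positivity
  have hUeq : U = (r0 ^ (m + 1) / ((2 : ℝ) ^ m * F * s)) ^ 2 := by
    have h1' : (r0 ^ (m + 1)) ^ 2 = r0 ^ (2 * m + 2) := by rw [← pow_mul]; congr 1; omega
    have h2' : ((2 : ℝ) ^ m * F * s) ^ 2 = ((2 : ℝ) ^ m * F) ^ 2 * (2 * (m : ℝ) + 2) := by
      rw [mul_pow, hs2]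
    rw [hU, div_pow, h1', h2']
    field_simp
  have hsqrtU : Real.sqrt U = r0 ^ (m + 1) / ((2 : ℝ) ^ m * F * s) := by
    rw [hUeq, Real.sqrt_sq (by positivity)]
  have hsqrtI_pos : 0 < Real.sqrt I := Real.sqrt_pos.mpr hI0
  have hsqrt_le : Real.sqrt I ≤ Real.sqrt U := Real.sqrt_le_sqrt hIU
  obtain ⟨hA1, _⟩ := hbd r0 ⟨hr0.le, le_refl _⟩
  set L : ℝ := (1 / 2) * ((r0 / 2) ^ m / F) with hL
  have hL0 : 0 < L := by positivity
  have hLU : L / Real.sqrt U = 1 / 2 * (s * r0⁻¹) := by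
    rw [hsqrtU, hL, div_pow]
    have h2m : ((2 : ℝ) ^ m) ≠ 0 := by positivity
    have hr0n : r0 ≠ 0 := hr0.ne'
    field_simp
    ring
  rw [ge_iff_le, ← hLU]
  have hA : besselJ (m : ℝ) r0 ≥ L := hA1
  calc L / Real.sqrt U ≤ besselJ (m : ℝ) r0 / Real.sqrt I :=
        div_le_div₀ (by linarith) hA hsqrtI_pos hsqrt_le
    _ = besselJ (m : ℝ) r0 / Real.sqrt I := rfl
end
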